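/- Let λ ∈ (0,1), α = (1−λ)/(1+λ), q(t), φ(t) = arccos q(t), and r(t) = √((t−α)(α⁻¹−t)) as above, and let ψ(t) ∈ (−π/2, 0) be the argument of 1 − λe^{iφ(t)}. Then tan ψ(t) = −r(t)/(t+1). -/

import Mathlib

open Real

/-- `ψ(t) = arg(1 − λe^{iφ(t)})` lies in `(−π/2, 0)` and `tan ψ(t) = −r(t)/(t+1)`. -/
theorem stmt10 (lam : ℝ) (hlam : lam ∈ Set.Ioo (0:ℝ) 1)
    (α : ℝ) (hα : α = (1 - lam) / (1 + lam))
    (t : ℝ) (ht : t ∈ Set.Ioo α α⁻¹)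
    (φt : ℝ)
    (hφt : φt = Real.arccos ((1 + lam ^ 2) / (2 * lam) - (1 - lam ^ 2) / (2 * lam * t)))
    (ψt : ℝ)
    (hψt : ψt = Complex.arg ((1 : ℂ) - (lam : ℂ) * Complex.exp (Complex.I * φt))) :
    ψt ∈ Set.Ioo (-(π / 2)) 0 ∧
      Real.tan ψt = -(Real.sqrt ((t - α) * (α⁻¹ - t))) / (t + 1) := by
  obtain ⟨hl0, hl1⟩ := hlam
  obtain ⟨htα, htα'⟩ := ht
  set q : ℝ := (1 + lam ^ 2) / (2 * lam) - (1 - lam ^ 2) / (2 * lam * t) with hq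
  have h1l : (0:ℝ) < 1 - lam := by linarith
  have h1l' : (0:ℝ) < 1 + lam := by linarith
  have hα0 : 0 < α := by rw [hα]; positivity
  have ht0 : 0 < t := lt_trans hα0 htα
  have hαinv : α⁻¹ = (1 + lam) / (1 - lam) := by
    rw [hα, inv_div]
  have h1 : 1 - lam * q = (1 - lam ^ 2) * (t + 1) / (2 * t) := by
    rw [hq]; field_simp; ring
  have h1l2 : (0:ℝ) < 1 - lam ^ 2 := by nlinarith
  have h2 : 1 - q ^ 2 = ((1 - lam ^ 2) / (2 * lam * t)) ^ 2 * ((t - α) * (α⁻¹ - t)) := by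
    rw [hq, hαinv, hα]; field_simp; ring
  have hprod : 0 < (t - α) * (α⁻¹ - t) := by
    apply mul_pos <;> linarith
  have h1q2 : 0 < 1 - q ^ 2 := by
    rw [h2]
    exact mul_pos (pow_pos (div_pos h1l2 (by positivity)) 2) hprod
  have hq1 : -1 ≤ q := by nlinarith
  have hq2 : q ≤ 1 := by nlinarith
  have hcos : Real.cos φt = q := by rw [hφt]; exact Real.cos_arccos hq1 hq2
  have hsin : Real.sin φt = Real.sqrt (1 - q ^ 2) := by
    rw [hφt, Real.sin_arccos]
  set z : ℂ := (1 : ℂ) - (lam : ℂ) * Complex.exp (Complex.I * φt) with hz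
  have hzre : z.re = 1 - lam * Real.cos φt := by
    rw [hz, mul_comm Complex.I]
    simp [Complex.exp_ofReal_mul_I_re]
  have hzim : z.im = -(lam * Real.sin φt) := by
    rw [hz, mul_comm Complex.I]
    simp [Complex.exp_ofReal_mul_I_im]
  have hre_pos : 0 < z.re := by
    rw [hzre, hcos, h1]
    exact div_pos (mul_pos h1l2 (by linarith)) (by positivity)
  have him_neg : z.im < 0 := by
    rw [hzim, hsin]
    have : 0 < Real.sqrt (1 - q ^ 2) := Real.sqrt_pos.mpr h1q2
    nlinarith
  constructor
  · constructor
    · have := (Complex.abs_arg_lt_pi_div_two_iff (z := z)).mpr (Or.inl hre_pos)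
      rw [hψt]; rw [abs_lt] at this; exact this.1
    · rw [hψt]; exact Complex.arg_neg_iff.mpr him_neg
  · rw [hψt, Complex.tan_arg, hzre, hzim, hcos, hsin, h1]
    have hc : (0:ℝ) ≤ (1 - lam ^ 2) / (2 * lam * t) := by positivity
    have hs : Real.sqrt (1 - q ^ 2)
        = (1 - lam ^ 2) / (2 * lam * t) * Real.sqrt ((t - α) * (α⁻¹ - t)) := by
      rw [h2, Real.sqrt_mul (sq_nonneg _), Real.sqrt_sq hc]
    set r := Real.sqrt ((t - α) * (α⁻¹ - t)) with hr
    rw [hs]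
    have ht1 : (0:ℝ) < t + 1 := by linarith
    rw [div_eq_div_iff (by positivity) (by positivity)]
    field_simp
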